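/- Let g : (0,∞) → ℝ be convex, non-increasing, C¹, with γ·g'(r)² ≤ g''(r) for a.e. r ∈ (0,∞) for some γ ∈ (0,1]. Then for all x, y > 0 and all a, b > 0: -(b²g'(y) - a²g'(x))(y - x) ≤ -(γ/2)·min(a²,b²)·(g(y) - g(x))² + (2/γ)·max(a²/b², b²/a²)·(b - a)². -/

import Mathlib

open MeasureTheory Set


lemma cs_Ioc {f : ℝ → ℝ} {x y : ℝ} (hxy : x ≤ y) (hf : ContinuousOn f (Icc x y)) :
    (∫ t in Ioc x y, f t)^2 ≤ (y - x) * ∫ t in Ioc x y, f t^2 := by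
  rcases eq_or_lt_of_le hxy with rfl | hlt
  · simp
  have hL : (0:ℝ) < y - x := by linarith
  have I1 : IntegrableOn f (Ioc x y) := (hf.integrableOn_Icc).mono_set Ioc_subset_Icc_self
  have I2 : IntegrableOn (fun t => f t ^ 2) (Ioc x y) :=
    ((hf.pow 2).integrableOn_Icc).mono_set Ioc_subset_Icc_self
  set A := ∫ t in Ioc x y, f t with hA
  set B := ∫ t in Ioc x y, f t ^ 2 with hB
  set c := A / (y - x) with hc
  have hvol : (volume (Ioc x y)).toReal = y - x := by
    rw [Real.volume_Ioc, ENNReal.toReal_ofReal hL.le]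
  have hexp : ∫ t in Ioc x y, (f t - c)^2 = B - 2*c*A + c^2*(y-x) := by
    have heq : ∀ t, (f t - c)^2 = (f t ^2 - (2*c) * f t) + c^2 := by intro t; ring
    calc ∫ t in Ioc x y, (f t - c)^2
        = ∫ t in Ioc x y, ((f t ^2 - (2*c) * f t) + c^2) := by
          exact integral_congr_ae (Filter.Eventually.of_forall fun t => heq t)
      _ = (∫ t in Ioc x y, (f t ^2 - (2*c) * f t)) + ∫ t in Ioc x y, (c^2 : ℝ) := by
          refine integral_add (I2.sub (I1.const_mul _)) ((integrableOn_const_iff (by finiteness)).2 ?_)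
          right; rw [Real.volume_Ioc]; exact ENNReal.ofReal_lt_top
      _ = B - (2*c)*A + c^2*(y-x) := by
          rw [integral_sub I2 (I1.const_mul _), integral_const_mul, setIntegral_const, measureReal_def, hvol, smul_eq_mul]
          ring
      _ = B - 2*c*A + c^2*(y-x) := by ring
  have h0 : 0 ≤ B - 2*c*A + c^2*(y-x) := hexp ▸ integral_nonneg fun t => sq_nonneg _
  have hcl : c * (y - x) = A := div_mul_cancel₀ A hL.ne'
  nlinarith [h0, hcl, hL]


lemma key_lemma (g g' g'' : ℝ → ℝ) (γ : ℝ) (hγ0 : 0 < γ)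
    (hmono : MonotoneOn g' (Set.Ioi (0:ℝ)))
    (hderiv : ∀ r ∈ Set.Ioi (0:ℝ), HasDerivAt g (g' r) r)
    (hcont : ContinuousOn g' (Set.Ioi (0:ℝ)))
    (hderiv2 : ∀ᵐ r ∂volume, r ∈ Set.Ioi (0:ℝ) → HasDerivAt g' (g'' r) r)
    (hineq : ∀ᵐ r ∂volume, r ∈ Set.Ioi (0:ℝ) → γ * (g' r)^2 ≤ g'' r)
    {x y : ℝ} (hx : 0 < x) (hxy : x < y) :
    γ * (g y - g x)^2 ≤ (g' y - g' x) * (y - x) := by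
  have hy : 0 < y := hx.trans hxy
  have hIcc : Icc x y ⊆ Ioi (0:ℝ) := fun t ht => lt_of_lt_of_le hx ht.1
  -- continuity of g' on [x,y]
  have hcont' : ContinuousOn g' (Icc x y) := hcont.mono hIcc
  -- FTC : g y - g x = ∫ over Ioc
  have hftc : g y - g x = ∫ t in Ioc x y, g' t := by
    rw [← intervalIntegral.integral_of_le hxy.le]
    rw [intervalIntegral.integral_eq_sub_of_hasDerivAt
      (fun t ht => hderiv t (hIcc (by rwa [Set.uIcc_of_le hxy.le] at ht)))
      ((hcont.mono (by rw [Set.uIcc_of_le hxy.le]; exact hIcc)).intervalIntegrable)]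
  -- the Stieltjes extension of g'
  set F : ℝ → ℝ := fun t => g' (max t x) with hF
  have hmax : ∀ t : ℝ, max t x ∈ Ioi (0:ℝ) := fun t => lt_of_lt_of_le hx (le_max_right t x)
  have hFmono : Monotone F := fun u v huv => hmono (hmax u) (hmax v) (max_le_max huv le_rfl)
  have hFcont : Continuous F := by
    rw [continuous_iff_continuousAt]
    intro t
    have h1 : ContinuousAt (fun s : ℝ => max s x) t := by fun_prop
    exact ContinuousAt.comp (x := t) (f := fun s : ℝ => max s x)
      (hcont.continuousAt (Ioi_mem_nhds (hmax t))) h1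
  set μ := hFmono.stieltjesFunction.measure with hμ
  have hst : ∀ t : ℝ, hFmono.stieltjesFunction t = F t := by
    intro t
    rw [hFmono.stieltjesFunction_eq]
    exact rightLim_eq_of_tendsto
      (hFcont.continuousAt.tendsto.mono_left nhdsWithin_le_nhds)
  have hμIoc : μ (Ioc x y) = ENNReal.ofReal (g' y - g' x) := by
    rw [StieltjesFunction.measure_Ioc, hst, hst]
    simp [hF, max_eq_left hxy.le, max_self]
  -- a.e. bound of γ g'^2 by the RN derivative
  have hae : ∀ᵐ t ∂(volume.restrict (Ioc x y)),
      ENNReal.ofReal (γ * g' t ^ 2) ≤ μ.rnDeriv volume t := by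
    filter_upwards [ae_restrict_of_ae hFmono.ae_hasDerivAt, ae_restrict_of_ae hderiv2,
      ae_restrict_of_ae hineq, ae_restrict_of_ae (Measure.rnDeriv_lt_top μ volume),
      ae_restrict_mem measurableSet_Ioc] with t h1 h2 h3 h4 ht
    have ht0 : t ∈ Ioi (0:ℝ) := lt_of_lt_of_le hx ht.1.le
    have hFg : g' =ᶠ[nhds t] F := by
      filter_upwards [Ioi_mem_nhds ht.1] with s hs
      simp [hF, max_eq_left (le_of_lt (Set.mem_Ioi.mp hs))]
    have hd : HasDerivAt g' ((μ.rnDeriv volume t).toReal) t := h1.congr_of_eventuallyEq hFg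
    have heq : g'' t = (μ.rnDeriv volume t).toReal := (h2 ht0).unique hd
    calc ENNReal.ofReal (γ * g' t ^ 2) ≤ ENNReal.ofReal ((μ.rnDeriv volume t).toReal) :=
          ENNReal.ofReal_le_ofReal (heq ▸ h3 ht0)
      _ = μ.rnDeriv volume t := ENNReal.ofReal_toReal h4.ne
  -- integral bound
  have hmonoxy : g' x ≤ g' y := hmono (hIcc ⟨le_rfl, hxy.le⟩) (hIcc ⟨hxy.le, le_rfl⟩) hxy.le
  have hIsq : IntegrableOn (fun t => γ * g' t ^ 2) (Ioc x y) :=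
    (((hcont'.pow 2).const_smul γ).integrableOn_Icc).mono_set Ioc_subset_Icc_self
  have hstep2 : γ * ∫ t in Ioc x y, g' t ^ 2 ≤ g' y - g' x := by
    have hbochner : ∫ t in Ioc x y, γ * g' t ^ 2
        = (∫⁻ t in Ioc x y, ENNReal.ofReal (γ * g' t ^ 2)).toReal := by
      refine integral_eq_lintegral_of_nonneg_ae (Filter.Eventually.of_forall fun t => ?_)
        hIsq.aestronglyMeasurable
      positivity
    have hlin : (∫⁻ t in Ioc x y, ENNReal.ofReal (γ * g' t ^ 2)) ≤ ENNReal.ofReal (g' y - g' x) :=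
      (lintegral_mono_ae hae).trans ((Measure.setLIntegral_rnDeriv_le _).trans_eq hμIoc)
    have := ENNReal.toReal_mono ENNReal.ofReal_ne_top hlin
    rw [ENNReal.toReal_ofReal (by linarith)] at this
    rw [← integral_const_mul] at *
    linarith [hbochner ▸ this]
  -- Cauchy–Schwarz
  have hcs : (g y - g x)^2 ≤ (y - x) * ∫ t in Ioc x y, g' t ^ 2 := by
    rw [hftc]; exact cs_Ioc hxy.le hcont'
  have hIsqnn : 0 ≤ ∫ t in Ioc x y, g' t ^ 2 := integral_nonneg fun t => sq_nonneg _
  nlinarith [mul_le_mul_of_nonneg_left hcs hγ0.le,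
    mul_le_mul_of_nonneg_left hstep2 (by linarith : (0:ℝ) ≤ y - x)]

lemma stmt1_case (γ a b Δ Dx Dy w M : ℝ) (hγ0 : 0 < γ) (ha : 0 < a) (hb : 0 < b)
    (hab : a ≤ b) (hM : b^2/a^2 ≤ M) (hMnn : 0 ≤ M)
    (hkey : γ * Δ^2 ≤ (Dy - Dx) * w)
    (hrem : 0 ≤ Dy * w ∨ (Δ ≤ Dy * w ∧ Dy * w ≤ 0)) :
    -(b^2 * Dy - a^2 * Dx) * w ≤ -(γ/2) * a^2 * Δ^2 + (2/γ) * M * (b-a)^2 := by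
  have hba : 0 ≤ b^2 - a^2 := by nlinarith
  have h1' : -(a^2*((Dy - Dx)*w)) ≤ -(a^2*(γ*Δ^2)) :=
    neg_le_neg (mul_le_mul_of_nonneg_left hkey (by positivity))
  have h2 : -((b^2-a^2)*(Dy*w)) ≤ (γ/2)*a^2*Δ^2 + (2/γ)*M*(b-a)^2 := by
    have hRHSnn : 0 ≤ (γ/2)*a^2*Δ^2 + (2/γ)*M*(b-a)^2 := by positivity
    rcases hrem with hnn | ⟨hs1, _⟩
    · nlinarith [mul_nonneg hba hnn]
    · have hstep := mul_le_mul_of_nonneg_left (neg_le_neg hs1) hba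
      have hyoung : (b^2-a^2)*(-Δ) ≤ (γ/2)*a^2*Δ^2 + (2/γ)*(b^2/a^2)*(b-a)^2 := by
        have hsq : (b^2-a^2)^2 ≤ 4*b^2*(b-a)^2 := by
          nlinarith [mul_nonneg (mul_nonneg (sq_nonneg (b-a)) (sub_nonneg.2 hab))
            (by linarith : (0:ℝ) ≤ 3*b + a)]
        have hP : 2*γ*a^2*((b^2-a^2)*(-Δ)) ≤ γ^2*a^4*Δ^2 + 4*b^2*(b-a)^2 := by
          nlinarith [sq_nonneg (γ*a^2*(-Δ) - (b^2-a^2)), hsq]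
        have h2γa : (0:ℝ) < 2*γ*a^2 := by positivity
        have hdiv : (b^2-a^2)*(-Δ) ≤ (γ^2*a^4*Δ^2 + 4*b^2*(b-a)^2)/(2*γ*a^2) := by
          rw [le_div_iff₀ h2γa]; linarith [hP]
        have heq2 : (γ^2*a^4*Δ^2 + 4*b^2*(b-a)^2)/(2*γ*a^2)
            = (γ/2)*a^2*Δ^2 + (2/γ)*(b^2/a^2)*(b-a)^2 := by
          field_simp; ring
        linarith [heq2 ▸ hdiv]
      have hlast := mul_le_mul_of_nonneg_left
        (mul_le_mul_of_nonneg_right hM (sq_nonneg (b-a))) (by positivity : (0:ℝ) ≤ 2/γ)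
      nlinarith [hstep, hyoung, hlast]
  have hpos : 0 ≤ γ*(a^2*Δ^2) := by positivity
  nlinarith [h1', h2, hpos]

/-- Lemma A.1, nondegenerate case `a, b > 0`. -/
theorem stmt1 (g g' g'' : ℝ → ℝ) (γ : ℝ) (hγ : γ ∈ Set.Ioc (0:ℝ) 1)
    (hconv : ConvexOn ℝ (Set.Ioi (0:ℝ)) g)
    (hanti : AntitoneOn g (Set.Ioi (0:ℝ)))
    (hderiv : ∀ r ∈ Set.Ioi (0:ℝ), HasDerivAt g (g' r) r)
    (hcont : ContinuousOn g' (Set.Ioi (0:ℝ)))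
    (hderiv2 : ∀ᵐ r ∂volume, r ∈ Set.Ioi (0:ℝ) → HasDerivAt g' (g'' r) r)
    (hineq : ∀ᵐ r ∂volume, r ∈ Set.Ioi (0:ℝ) → γ * (g' r)^2 ≤ g'' r) :
    ∀ x y a b : ℝ, 0 < x → 0 < y → 0 < a → 0 < b →
      -(b^2 * g' y - a^2 * g' x) * (y - x) ≤
        -(γ/2) * min (a^2) (b^2) * (g y - g x)^2
          + (2/γ) * max (a^2/b^2) (b^2/a^2) * (b - a)^2 := by
  obtain ⟨hγ0, hγ1⟩ := hγ
  -- monotonicity of g'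
  have hmono : MonotoneOn g' (Set.Ioi (0:ℝ)) := by
    intro u hu v hv huv
    rcases eq_or_lt_of_le huv with rfl | h
    · exact le_rfl
    exact (hconv.le_slope_of_hasDerivAt hu hv h (hderiv u hu)).trans
      (hconv.slope_le_of_hasDerivAt hu hv h (hderiv v hv))
  -- g' is nonpositive
  have hg'le : ∀ r ∈ Set.Ioi (0:ℝ), g' r ≤ 0 := by
    intro r hr
    have hr' : (0:ℝ) < r := hr
    have h2 : r + 1 ∈ Set.Ioi (0:ℝ) := by simp only [Set.mem_Ioi]; linarith
    have hsl := hconv.le_slope_of_hasDerivAt hr h2 (by linarith) (hderiv r hr)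
    rw [slope_def_field] at hsl
    have hga : g (r + 1) ≤ g r := hanti hr h2 (by linarith)
    calc g' r ≤ (g (r+1) - g r) / (r + 1 - r) := hsl
      _ ≤ 0 := by rw [show r + 1 - r = (1:ℝ) by ring]; simpa using hga
  -- symmetric key inequality
  have key : ∀ u v : ℝ, 0 < u → 0 < v →
      γ * (g v - g u)^2 ≤ (g' v - g' u) * (v - u) := by
    intro u v hu hv
    rcases lt_trichotomy u v with h | rfl | h
    · exact key_lemma g g' g'' γ hγ0 hmono hderiv hcont hderiv2 hineq hu h
    · simp
    · have := key_lemma g g' g'' γ hγ0 hmono hderiv hcont hderiv2 hineq hv h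
      nlinarith [this]
  -- tangent-line inequality: for u < v, g v - g u ≤ g' v * (v - u)
  have tangent : ∀ u v : ℝ, 0 < u → u < v → g v - g u ≤ g' v * (v - u) := by
    intro u v hu huv
    have hv : v ∈ Set.Ioi (0:ℝ) := by simp only [Set.mem_Ioi]; linarith
    have hsl := hconv.slope_le_of_hasDerivAt hu hv huv (hderiv v hv)
    rw [slope_def_field, div_le_iff₀ (by linarith : (0:ℝ) < v - u)] at hsl
    linarith [hsl]
  intro x y a b hx hy ha hb
  set M : ℝ := max (a^2/b^2) (b^2/a^2) with hMdef
  have hMnn : (0:ℝ) ≤ M := le_trans (by positivity) (le_max_left _ _)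
  rcases le_total a b with hab | hab
  · -- min = a², remainder at y
    have hmin : min (a^2) (b^2) = a^2 := min_eq_left (by nlinarith)
    rw [hmin]
    have hrem : 0 ≤ g' y * (y - x) ∨
        ((g y - g x) ≤ g' y * (y - x) ∧ g' y * (y - x) ≤ 0) := by
      rcases le_or_gt y x with hyx | hxy
      · left; have := hg'le y hy; nlinarith
      · right
        refine ⟨tangent x y hx hxy, ?_⟩
        have := hg'le y hy; nlinarith
    exact stmt1_case γ a b (g y - g x) (g' x) (g' y) (y - x) M hγ0 ha hb hab
      (le_max_right _ _) hMnn (key x y hx hy) hrem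
  · -- min = b²; apply the case lemma with roles swapped
    have hmin : min (a^2) (b^2) = b^2 := min_eq_right (by nlinarith)
    rw [hmin]
    have hrem : 0 ≤ g' x * (x - y) ∨
        ((g x - g y) ≤ g' x * (x - y) ∧ g' x * (x - y) ≤ 0) := by
      rcases le_or_gt x y with hxy | hyx
      · left; have := hg'le x hx; nlinarith
      · right
        refine ⟨tangent y x hy hyx, ?_⟩
        have := hg'le x hx; nlinarith
    have := stmt1_case γ b a (g x - g y) (g' y) (g' x) (x - y) M hγ0 hb ha hab
      (le_max_left _ _) hMnn (key y x hy hx) hrem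
    nlinarith [this]
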